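/- arXiv:2604.03884 — 2 statements merged into one kernel-verified Lean document; each statement's English description precedes it below -/
import Mathlib

section
/- Tsirelson's bound: Let H_A and H_B be finite-dimensional complex inner product spaces, let ψ ∈ H_A ⊗ H_B be a unit vector, and let A0, A1 be binary observables on H_A and B0, B1 binary observables on H_B. Then the CHSH bias satisfies Re⟨ψ, (A0⊗B0 + A0⊗B1 + A1⊗B0 − A1⊗B1) ψ⟩ ≤ 2√2. -/
set_option maxHeartbeats 1000000
set_option synthInstance.maxHeartbeats 400000
set_option synthInstance.maxSize 2048

noncomputable section

open scoped TensorProduct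
open Module

/-! ## The canonical inner product space structure on tensor products -/

section TensorInner

variable (E F : Type*) [NormedAddCommGroup E] [InnerProductSpace ℂ E] [FiniteDimensional ℂ E]
  [NormedAddCommGroup F] [InnerProductSpace ℂ F] [FiniteDimensional ℂ F]

/-- Coordinate representation of `E ⊗[ℂ] F` with respect to the tensor product of
orthonormal bases of `E` and `F`. -/
def tensorRepr : (E ⊗[ℂ] F) ≃ₗ[ℂ]
    EuclideanSpace ℂ (Fin (finrank ℂ E) × Fin (finrank ℂ F)) :=
  (((stdOrthonormalBasis ℂ E).toBasis.tensorProduct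
      (stdOrthonormalBasis ℂ F).toBasis).equivFun).trans
    (WithLp.linearEquiv 2 ℂ ((Fin (finrank ℂ E) × Fin (finrank ℂ F)) → ℂ)).symm

/-- The canonical inner product on the tensor product of two finite-dimensional complex
inner product spaces; it satisfies `⟪a ⊗ b, c ⊗ d⟫ = ⟪a, c⟫ * ⟪b, d⟫`. -/
def tensorCore : InnerProductSpace.Core ℂ (E ⊗[ℂ] F) where
  inner x y := inner ℂ (tensorRepr E F x) (tensorRepr E F y)
  conj_inner_symm x y := inner_conj_symm (𝕜 := ℂ) (tensorRepr E F x) (tensorRepr E F y)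
  re_inner_nonneg x := inner_self_nonneg (𝕜 := ℂ) (x := tensorRepr E F x)
  add_left x y z := by simp [map_add, inner_add_left]
  smul_left x y r := by simp [map_smul, inner_smul_left, mul_comm]
  definite x h := by
    have h0 : tensorRepr E F x = 0 := inner_self_eq_zero.mp h
    simpa using (LinearEquiv.map_eq_zero_iff _).mp h0

noncomputable instance tensorNormedAddCommGroup : NormedAddCommGroup (E ⊗[ℂ] F) :=
  (tensorCore E F).toNormedAddCommGroup

noncomputable instance tensorInnerProductSpace : InnerProductSpace ℂ (E ⊗[ℂ] F) :=
  InnerProductSpace.ofCore (tensorCore E F).toCore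

end TensorInner

notation "⟪" x ", " y "⟫" => (inner (𝕜 := ℂ) x y)

/-! ## Qubits, standard states and gates -/

/-- The qubit space `ℂ²`. -/
abbrev Qubit := EuclideanSpace ℂ (Fin 2)

/-- The standard basis state `|0⟩`. -/
def ket0 : Qubit := EuclideanSpace.single 0 1

/-- The standard basis state `|1⟩`. -/
def ket1 : Qubit := EuclideanSpace.single 1 1

/-- The rank-one operator `|a⟩⟨b|` on an inner product space. -/
def ketbra {H : Type*} [NormedAddCommGroup H] [InnerProductSpace ℂ H] (a b : H) :
    H →ₗ[ℂ] H where
  toFun v := (inner ℂ b v : ℂ) • a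
  map_add' u v := by simp [inner_add_right, add_smul]
  map_smul' c v := by simp [inner_smul_right, smul_smul]

/-- The projector `|0⟩⟨0|`. -/
def proj0 : Qubit →ₗ[ℂ] Qubit := ketbra ket0 ket0

/-- The projector `|1⟩⟨1|`. -/
def proj1 : Qubit →ₗ[ℂ] Qubit := ketbra ket1 ket1

/-- The Pauli operator `σ_z = |0⟩⟨0| - |1⟩⟨1|`. -/
def pauliZ : Qubit →ₗ[ℂ] Qubit := ketbra ket0 ket0 - ketbra ket1 ket1

/-- The Pauli operator `σ_x = |0⟩⟨1| + |1⟩⟨0|`. -/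
def pauliX : Qubit →ₗ[ℂ] Qubit := ketbra ket0 ket1 + ketbra ket1 ket0

/-- The Hadamard gate `H = (Z + X)/√2`. -/
def Hadamard : Qubit →ₗ[ℂ] Qubit := ((Real.sqrt 2 : ℂ))⁻¹ • (pauliZ + pauliX)

/-- The reflected Hadamard gate `H' = (Z - X)/√2`. -/
def HadamardPrime : Qubit →ₗ[ℂ] Qubit := ((Real.sqrt 2 : ℂ))⁻¹ • (pauliZ - pauliX)

/-- The rotation `R = sin(π/8)·X + cos(π/8)·Z`, satisfying `RZR† = H`, `RXR† = H'`. -/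
def Rotation : Qubit →ₗ[ℂ] Qubit :=
  (Real.sin (Real.pi / 8) : ℂ) • pauliX + (Real.cos (Real.pi / 8) : ℂ) • pauliZ

/-! ## Bell states -/

/-- The Bell state `|Φ+⟩ = (|00⟩ + |11⟩)/√2`. -/
def bellPhiPlus : Qubit ⊗[ℂ] Qubit :=
  ((Real.sqrt 2 : ℂ))⁻¹ • (ket0 ⊗ₜ[ℂ] ket0 + ket1 ⊗ₜ[ℂ] ket1)

/-- The Bell state `|Φ−⟩ = (|00⟩ − |11⟩)/√2`. -/
def bellPhiMinus : Qubit ⊗[ℂ] Qubit :=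
  ((Real.sqrt 2 : ℂ))⁻¹ • (ket0 ⊗ₜ[ℂ] ket0 - ket1 ⊗ₜ[ℂ] ket1)

/-- The Bell state `|Ψ+⟩ = (|01⟩ + |10⟩)/√2`. -/
def bellPsiPlus : Qubit ⊗[ℂ] Qubit :=
  ((Real.sqrt 2 : ℂ))⁻¹ • (ket0 ⊗ₜ[ℂ] ket1 + ket1 ⊗ₜ[ℂ] ket0)

/-- The Bell state `|Ψ−⟩ = (|01⟩ − |10⟩)/√2`. -/
def bellPsiMinus : Qubit ⊗[ℂ] Qubit :=
  ((Real.sqrt 2 : ℂ))⁻¹ • (ket0 ⊗ₜ[ℂ] ket1 - ket1 ⊗ₜ[ℂ] ket0)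

/-! ## Binary observables and CHSH strategies -/

/-- A binary observable: a symmetric (self-adjoint) involution. -/
structure IsBinaryObservable {H : Type*} [NormedAddCommGroup H] [InnerProductSpace ℂ H]
    (A : H →ₗ[ℂ] H) : Prop where
  symm : A.IsSymmetric
  sq_one : A ∘ₗ A = LinearMap.id

variable {H_A H_B : Type*}
  [NormedAddCommGroup H_A] [InnerProductSpace ℂ H_A] [FiniteDimensional ℂ H_A]
  [NormedAddCommGroup H_B] [InnerProductSpace ℂ H_B] [FiniteDimensional ℂ H_B]

/-- A CHSH strategy: a shared unit state together with two binary observables per party. -/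
structure CHSHStrategy (H_A H_B : Type*)
    [NormedAddCommGroup H_A] [InnerProductSpace ℂ H_A] [FiniteDimensional ℂ H_A]
    [NormedAddCommGroup H_B] [InnerProductSpace ℂ H_B] [FiniteDimensional ℂ H_B] where
  psi : H_A ⊗[ℂ] H_B
  psi_norm : ‖psi‖ = 1
  A0 : H_A →ₗ[ℂ] H_A
  A1 : H_A →ₗ[ℂ] H_A
  B0 : H_B →ₗ[ℂ] H_B
  B1 : H_B →ₗ[ℂ] H_B
  A0_bin : IsBinaryObservable A0
  A1_bin : IsBinaryObservable A1
  B0_bin : IsBinaryObservable B0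
  B1_bin : IsBinaryObservable B1

/-- The general CHSH operator `A0⊗B0 + A0⊗B1 + A1⊗B0 − A1⊗B1`. -/
def CHSH_op (A0 A1 : H_A →ₗ[ℂ] H_A) (B0 B1 : H_B →ₗ[ℂ] H_B) :
    H_A ⊗[ℂ] H_B →ₗ[ℂ] H_A ⊗[ℂ] H_B :=
  TensorProduct.map A0 B0 + TensorProduct.map A0 B1 +
    TensorProduct.map A1 B0 - TensorProduct.map A1 B1

/-- The CHSH bias `β(S) = Re⟨ψ, CHSH ψ⟩` of a strategy. -/
def chshBias (S : CHSHStrategy H_A H_B) : ℝ :=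
  (⟪S.psi, (CHSH_op S.A0 S.A1 S.B0 S.B1) S.psi⟫).re

/-- Alice's observable acting on the shared state. -/
def applyAlice (A : H_A →ₗ[ℂ] H_A) : H_A ⊗[ℂ] H_B →ₗ[ℂ] H_A ⊗[ℂ] H_B :=
  TensorProduct.map A LinearMap.id

/-- Bob's observable acting on the shared state. -/
def applyBob (B : H_B →ₗ[ℂ] H_B) : H_A ⊗[ℂ] H_B →ₗ[ℂ] H_A ⊗[ℂ] H_B :=
  TensorProduct.map LinearMap.id B

/-! ## The extraction circuit -/

variable {H : Type*} [NormedAddCommGroup H] [InnerProductSpace ℂ H] [FiniteDimensional ℂ H]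

/-- Ancilla embedding `v ↦ |aux⟩ ⊗ v`. -/
def embed (aux : Qubit) : H →ₗ[ℂ] (Qubit ⊗[ℂ] H) :=
  (TensorProduct.mk ℂ Qubit H) aux

/-- Controlled gate `|0⟩⟨0| ⊗ I + |1⟩⟨1| ⊗ A`. -/
def controlGate (A : H →ₗ[ℂ] H) : (Qubit ⊗[ℂ] H) →ₗ[ℂ] (Qubit ⊗[ℂ] H) :=
  TensorProduct.map proj0 (LinearMap.id : H →ₗ[ℂ] H) + TensorProduct.map proj1 A

/-- The extraction unitary `U_A = C_{A1}(H ⊗ I)C_{A0}(H ⊗ I)`. -/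
def unitaryUA (A0 A1 : H →ₗ[ℂ] H) : (Qubit ⊗[ℂ] H) →ₗ[ℂ] (Qubit ⊗[ℂ] H) :=
  (controlGate A1) ∘ₗ (TensorProduct.map Hadamard LinearMap.id) ∘ₗ
    (controlGate A0) ∘ₗ (TensorProduct.map Hadamard LinearMap.id)

/-- Alice's extractor `V_A = U_A (|0⟩ ⊗ ·)`. -/
def VA (A0 A1 : H →ₗ[ℂ] H) : H →ₗ[ℂ] (Qubit ⊗[ℂ] H) :=
  (unitaryUA A0 A1) ∘ₗ (embed ket0)

/-- Bob's rotated extraction unitary `U_B = (R ⊗ I) U_A(B0,B1) (R† ⊗ I)`. -/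
def unitaryUB (B0 B1 : H →ₗ[ℂ] H) : (Qubit ⊗[ℂ] H) →ₗ[ℂ] (Qubit ⊗[ℂ] H) :=
  (TensorProduct.map Rotation LinearMap.id) ∘ₗ (unitaryUA B0 B1) ∘ₗ
    (TensorProduct.map (LinearMap.adjoint Rotation) LinearMap.id)

/-- Bob's rotated ancilla `|aux⟩ = R|0⟩`. -/
def auxState : Qubit := Rotation ket0

/-- Bob's extractor `V_B = U_B (|aux⟩ ⊗ ·)`. -/
def VB (B0 B1 : H →ₗ[ℂ] H) : H →ₗ[ℂ] (Qubit ⊗[ℂ] H) :=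
  (unitaryUB B0 B1) ∘ₗ (embed auxState)

/-! ## Tensor regrouping -/

/-- The canonical regrouping isomorphism
`(ℂ² ⊗ H_A) ⊗ (ℂ² ⊗ H_B) ≃ (ℂ² ⊗ ℂ²) ⊗ (H_A ⊗ H_B)`. -/
def regSwap (H_A H_B : Type*)
    [NormedAddCommGroup H_A] [InnerProductSpace ℂ H_A] [FiniteDimensional ℂ H_A]
    [NormedAddCommGroup H_B] [InnerProductSpace ℂ H_B] [FiniteDimensional ℂ H_B] :
    ((Qubit ⊗[ℂ] H_A) ⊗[ℂ] (Qubit ⊗[ℂ] H_B)) ≃ₗ[ℂ]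
      ((Qubit ⊗[ℂ] Qubit) ⊗[ℂ] (H_A ⊗[ℂ] H_B)) :=
  (TensorProduct.assoc ℂ Qubit H_A (Qubit ⊗[ℂ] H_B)).trans <|
    (TensorProduct.congr (LinearEquiv.refl ℂ Qubit)
      (((TensorProduct.assoc ℂ H_A Qubit H_B).symm.trans
        (TensorProduct.congr (TensorProduct.comm ℂ H_A Qubit) (LinearEquiv.refl ℂ H_B))).trans
          (TensorProduct.assoc ℂ Qubit H_A H_B))).trans
      (TensorProduct.assoc ℂ Qubit Qubit (H_A ⊗[ℂ] H_B)).symm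

/-! ## The canonical two-qubit CHSH operator and the constants -/

/-- The canonical two-qubit CHSH operator `K = Z⊗H + Z⊗H' + X⊗H − X⊗H'`. -/
def K : (Qubit ⊗[ℂ] Qubit) →ₗ[ℂ] (Qubit ⊗[ℂ] Qubit) :=
  TensorProduct.map pauliZ Hadamard + TensorProduct.map pauliZ HadamardPrime +
    TensorProduct.map pauliX Hadamard - TensorProduct.map pauliX HadamardPrime

/-- The constant `c = 128√2` in the anticommutator bounds. -/
def cConst : ℝ := 128 * Real.sqrt 2

/-- The error function `δ(ε) = ε + 4√(cε)`. -/
def delta (ε : ℝ) : ℝ := ε + 4 * Real.sqrt (cConst * ε)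

end

open scoped TensorProduct
open Module

section lemmas
attribute [-instance] tensorInnerProductSpace tensorNormedAddCommGroup
variable {E F : Type*} [NormedAddCommGroup E] [InnerProductSpace ℂ E] [FiniteDimensional ℂ E]
  [NormedAddCommGroup F] [InnerProductSpace ℂ F] [FiniteDimensional ℂ F]

lemma inner_repr_tmul (a c : E) (b d : F) :
    inner (𝕜 := ℂ) (tensorRepr E F (a ⊗ₜ b)) (tensorRepr E F (c ⊗ₜ d)) = ⟪a, c⟫ * ⟪b, d⟫ := by
  rw [PiLp.inner_apply]
  rw [← OrthonormalBasis.sum_inner_mul_inner (stdOrthonormalBasis ℂ E) a c,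
    ← OrthonormalBasis.sum_inner_mul_inner (stdOrthonormalBasis ℂ F) b d,
    Fintype.sum_mul_sum]
  rw [Fintype.sum_prod_type]
  congr 1; funext i; congr 1; funext j
  simp only [tensorRepr, LinearEquiv.trans_apply, WithLp.coe_symm_linearEquiv, PiLp.toLp_apply, WithLp.ofLp_toLp,
    Basis.equivFun_apply,
    Basis.tensorProduct_repr_tmul_apply, OrthonormalBasis.coe_toBasis_repr_apply,
    OrthonormalBasis.repr_apply_apply, RCLike.inner_apply, smul_eq_mul, map_mul,
    ← inner_conj_symm a, ← inner_conj_symm b]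
  ring

lemma repr_inner (x y : E ⊗[ℂ] F) :
    inner (𝕜 := ℂ) (tensorRepr E F x) (tensorRepr E F y) = ⟪x, y⟫ := by
  induction x using TensorProduct.induction_on with
  | zero => simp
  | tmul a b =>
    induction y using TensorProduct.induction_on with
    | zero => simp
    | tmul c d => rw [inner_repr_tmul, TensorProduct.inner_tmul]
    | add u v hu hv => simp only [map_add, inner_add_right, hu, hv]
  | add u v hu hv => simp only [map_add, inner_add_left, hu, hv]

lemma inner_tmul (a c : E) (b d : F) :
    ⟪a ⊗ₜ[ℂ] b, c ⊗ₜ[ℂ] d⟫ = ⟪a, c⟫ * ⟪b, d⟫ := TensorProduct.inner_tmul ℂ a c b d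

lemma map_isSymmetric {A : E →ₗ[ℂ] E} {B : F →ₗ[ℂ] F}
    (hA : A.IsSymmetric) (hB : B.IsSymmetric) :
    (TensorProduct.map A B).IsSymmetric := by
  intro x y
  induction x using TensorProduct.induction_on with
  | zero => simp
  | tmul a b =>
    induction y using TensorProduct.induction_on with
    | zero => simp
    | tmul c d => simp only [TensorProduct.map_tmul, inner_tmul, hA a c, hB b d]
    | add u v hu hv => simp only [map_add, inner_add_right, hu, hv]
  | add u v hu hv => simp only [map_add, inner_add_left, hu, hv]

theorem tsirelson_bound_aux
    {H_A H_B : Type*}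
    [NormedAddCommGroup H_A] [InnerProductSpace ℂ H_A] [FiniteDimensional ℂ H_A]
    [NormedAddCommGroup H_B] [InnerProductSpace ℂ H_B] [FiniteDimensional ℂ H_B]
    (ψ : H_A ⊗[ℂ] H_B) (hψ2 : (⟪ψ, ψ⟫ : ℂ) = 1)
    (A0 A1 : H_A →ₗ[ℂ] H_A) (B0 B1 : H_B →ₗ[ℂ] H_B)
    (hA0 : IsBinaryObservable A0) (hA1 : IsBinaryObservable A1)
    (hB0 : IsBinaryObservable B0) (hB1 : IsBinaryObservable B1) :
    (⟪ψ, (CHSH_op A0 A1 B0 B1) ψ⟫).re ≤ 2 * Real.sqrt 2 := by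
  -- the four one-sided observables
  set a0 : H_A ⊗[ℂ] H_B →ₗ[ℂ] H_A ⊗[ℂ] H_B := TensorProduct.map A0 LinearMap.id with ha0def
  set a1 : H_A ⊗[ℂ] H_B →ₗ[ℂ] H_A ⊗[ℂ] H_B := TensorProduct.map A1 LinearMap.id with ha1def
  set b0 : H_A ⊗[ℂ] H_B →ₗ[ℂ] H_A ⊗[ℂ] H_B := TensorProduct.map LinearMap.id B0 with hb0def
  set b1 : H_A ⊗[ℂ] H_B →ₗ[ℂ] H_A ⊗[ℂ] H_B := TensorProduct.map LinearMap.id B1 with hb1def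
  have idsymm : (LinearMap.id : H_A →ₗ[ℂ] H_A).IsSymmetric := fun x y => rfl
  have idsymm' : (LinearMap.id : H_B →ₗ[ℂ] H_B).IsSymmetric := fun x y => rfl
  have sa0 : a0.IsSymmetric := map_isSymmetric hA0.symm idsymm'
  have sa1 : a1.IsSymmetric := map_isSymmetric hA1.symm idsymm'
  have sb0 : b0.IsSymmetric := map_isSymmetric idsymm hB0.symm
  have sb1 : b1.IsSymmetric := map_isSymmetric idsymm hB1.symm
  -- multiplicative relations
  have hmul : ∀ (A : H_A →ₗ[ℂ] H_A) (B : H_B →ₗ[ℂ] H_B),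
      (TensorProduct.map A LinearMap.id) * (TensorProduct.map LinearMap.id B)
        = TensorProduct.map A B := by
    intro A B
    rw [Module.End.mul_eq_comp, ← TensorProduct.map_comp]
    simp
  have hmul' : ∀ (A : H_A →ₗ[ℂ] H_A) (B : H_B →ₗ[ℂ] H_B),
      (TensorProduct.map LinearMap.id B) * (TensorProduct.map A LinearMap.id)
        = TensorProduct.map A B := by
    intro A B
    rw [Module.End.mul_eq_comp, ← TensorProduct.map_comp]
    simp
  have sq0 : a0 * a0 = 1 := by
    rw [ha0def, Module.End.mul_eq_comp, ← TensorProduct.map_comp, hA0.sq_one]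
    simp [TensorProduct.map_id, Module.End.one_eq_id]
  have sq1 : a1 * a1 = 1 := by
    rw [ha1def, Module.End.mul_eq_comp, ← TensorProduct.map_comp, hA1.sq_one]
    simp [TensorProduct.map_id, Module.End.one_eq_id]
  have sq2 : b0 * b0 = 1 := by
    rw [hb0def, Module.End.mul_eq_comp, ← TensorProduct.map_comp, hB0.sq_one]
    simp [TensorProduct.map_id, Module.End.one_eq_id]
  have sq3 : b1 * b1 = 1 := by
    rw [hb1def, Module.End.mul_eq_comp, ← TensorProduct.map_comp, hB1.sq_one]
    simp [TensorProduct.map_id, Module.End.one_eq_id]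
  have c00 : b0 * a0 = a0 * b0 := by rw [ha0def, hb0def, hmul, hmul']
  have c01 : b1 * a0 = a0 * b1 := by rw [ha0def, hb1def, hmul, hmul']
  have c10 : b0 * a1 = a1 * b0 := by rw [ha1def, hb0def, hmul, hmul']
  have c11 : b1 * a1 = a1 * b1 := by rw [ha1def, hb1def, hmul, hmul']
  -- the CHSH operator
  set T : H_A ⊗[ℂ] H_B →ₗ[ℂ] H_A ⊗[ℂ] H_B := a0 * b0 + a0 * b1 + a1 * b0 - a1 * b1 with hT
  have hTop : CHSH_op A0 A1 B0 B1 = T := by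
    rw [hT, CHSH_op, ha0def, ha1def, hb0def, hb1def, hmul, hmul, hmul, hmul]
  set sR : ℝ := (Real.sqrt 2)⁻¹ with hsR
  set s : ℂ := (sR : ℂ) with hs
  have h2c : ((Real.sqrt 2 : ℝ) : ℂ) * ((Real.sqrt 2 : ℝ) : ℂ) = 2 := by
    norm_cast
    rw [Real.mul_self_sqrt (by norm_num)]
  have hss : s * s = (2 : ℂ)⁻¹ := by
    rw [hs, hsR]
    push_cast
    rw [← mul_inv, h2c]
  set P : H_A ⊗[ℂ] H_B →ₗ[ℂ] H_A ⊗[ℂ] H_B := s • (a1 + a0) - b0 with hP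
  set Q : H_A ⊗[ℂ] H_B →ₗ[ℂ] H_A ⊗[ℂ] H_B := s • (a1 - a0) + b1 with hQ
  -- the sum-of-squares identity
  have key : P * P + Q * Q = (4 : ℂ) • (1 : H_A ⊗[ℂ] H_B →ₗ[ℂ] H_A ⊗[ℂ] H_B) - ((2 : ℂ) * s) • T := by
    rw [hP, hQ, hT]
    simp only [mul_add, add_mul, mul_sub, sub_mul, smul_add, smul_sub,
      smul_mul_assoc, mul_smul_comm, smul_smul, hss, sq0, sq1, sq2, sq3,
      c00, c01, c10, c11]
    module
  -- P and Q are symmetric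
  have hsconj : (starRingEnd ℂ) s = s := by rw [hs]; exact Complex.conj_ofReal _
  have symP : P.IsSymmetric := by
    intro x y
    simp only [hP, LinearMap.sub_apply, LinearMap.smul_apply, LinearMap.add_apply,
      inner_sub_left, inner_sub_right, inner_add_left, inner_add_right,
      inner_smul_left, inner_smul_right, hsconj, sa0 x y, sa1 x y, sb0 x y]
  have symQ : Q.IsSymmetric := by
    intro x y
    simp only [hQ, LinearMap.sub_apply, LinearMap.smul_apply, LinearMap.add_apply,
      inner_sub_left, inner_sub_right, inner_add_left, inner_add_right,
      inner_smul_left, inner_smul_right, hsconj, sa0 x y, sa1 x y, sb1 x y]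
  -- evaluate at ψ
  have happ := LinearMap.congr_fun key ψ
  have hinner := congrArg (fun z => (⟪ψ, z⟫ : ℂ)) happ
  simp only [LinearMap.add_apply, LinearMap.sub_apply, LinearMap.smul_apply,
    Module.End.one_apply, Module.End.mul_apply, inner_add_right, inner_sub_right,
    inner_smul_right] at hinner
  rw [← symP ψ (P ψ), ← symQ ψ (Q ψ)] at hinner
  rw [hTop]
  rw [hψ2] at hinner
  have h2s : (2 : ℂ) * s = ((2 * sR : ℝ) : ℂ) := by rw [hs]; push_cast; ring
  rw [h2s] at hinner
  have hre := congrArg Complex.re hinner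
  simp only [Complex.add_re, Complex.sub_re, Complex.re_ofReal_mul, mul_one,
    Complex.re_ofNat] at hre
  have hle : (0:ℝ) ≤ (⟪P ψ, P ψ⟫ : ℂ).re := by
    exact inner_self_nonneg (𝕜 := ℂ) (x := P ψ)
  have hle' : (0:ℝ) ≤ (⟪Q ψ, Q ψ⟫ : ℂ).re := by
    exact inner_self_nonneg (𝕜 := ℂ) (x := Q ψ)
  have hbound : 2 * sR * (⟪ψ, T ψ⟫ : ℂ).re ≤ 4 := by linarith
  have hspos : 0 < Real.sqrt 2 := Real.sqrt_pos.mpr (by norm_num)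
  have hsRmul : sR * Real.sqrt 2 = 1 := by
    rw [hsR]; field_simp
  nlinarith [mul_le_mul_of_nonneg_right hbound hspos.le, hsRmul,
    Real.mul_self_sqrt (by norm_num : (0:ℝ) ≤ 2)]

end lemmas

/-- **Tsirelson's bound.** -/
theorem tsirelson_bound
    {H_A H_B : Type*}
    [NormedAddCommGroup H_A] [InnerProductSpace ℂ H_A] [FiniteDimensional ℂ H_A]
    [NormedAddCommGroup H_B] [InnerProductSpace ℂ H_B] [FiniteDimensional ℂ H_B]
    (ψ : H_A ⊗[ℂ] H_B) (hψ : ‖ψ‖ = 1)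
    (A0 A1 : H_A →ₗ[ℂ] H_A) (B0 B1 : H_B →ₗ[ℂ] H_B)
    (hA0 : IsBinaryObservable A0) (hA1 : IsBinaryObservable A1)
    (hB0 : IsBinaryObservable B0) (hB1 : IsBinaryObservable B1) :
    (⟪ψ, (CHSH_op A0 A1 B0 B1) ψ⟫).re ≤ 2 * Real.sqrt 2 := by
  have h1 : inner (𝕜 := ℂ) (tensorRepr H_A H_B ψ) (tensorRepr H_A H_B ψ) = (1 : ℂ) := by
    calc inner (𝕜 := ℂ) (tensorRepr H_A H_B ψ) (tensorRepr H_A H_B ψ)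
        = ((‖ψ‖ : ℝ) : ℂ) ^ 2 := inner_self_eq_norm_sq_to_K ψ
      _ = 1 := by rw [hψ]; norm_num
  exact tsirelson_bound_aux ψ (by rw [← repr_inner]; exact h1) A0 A1 B0 B1 hA0 hA1 hB0 hB1
end

section
/- Exact intertwining for A0: Let H_A be a finite-dimensional complex inner product space and let A0, A1 be binary observables on H_A. With V_A : H_A → ℂ² ⊗ H_A the Alice extractor defined by V_A(v) := U_A(|0⟩ ⊗ v) where U_A := control(A1) ∘ (Had ⊗ I) ∘ control(A0) ∘ (Had ⊗ I), one has the exact operator identity (Z ⊗ I) ∘ V_A = V_A ∘ A0. -/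
set_option maxHeartbeats 1000000
set_option synthInstance.maxHeartbeats 400000
set_option synthInstance.maxSize 2048

open scoped TensorProduct
open Module

section MyHelpers


lemma my_k00 : ket0 0 = 1 := by simp [ket0, EuclideanSpace.single_apply]
lemma my_k01 : ket0 1 = 0 := by simp [ket0, EuclideanSpace.single_apply]
lemma my_k10 : ket1 0 = 0 := by simp [ket1, EuclideanSpace.single_apply]
lemma my_k11 : ket1 1 = 1 := by simp [ket1, EuclideanSpace.single_apply]

lemma my_inner00 : (inner ℂ ket0 ket0 : ℂ) = 1 := by
  simp [ket0, EuclideanSpace.inner_single_left, EuclideanSpace.single_apply]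

lemma my_inner01 : (inner ℂ ket0 ket1 : ℂ) = 0 := by
  simp [ket0, ket1, EuclideanSpace.inner_single_left, EuclideanSpace.single_apply]

lemma my_inner10 : (inner ℂ ket1 ket0 : ℂ) = 0 := by
  simp [ket0, ket1, EuclideanSpace.inner_single_left, EuclideanSpace.single_apply]

lemma my_inner11 : (inner ℂ ket1 ket1 : ℂ) = 1 := by
  simp [ket1, EuclideanSpace.inner_single_left, EuclideanSpace.single_apply]

lemma my_norm0 : ‖ket0‖ = 1 := by simp [ket0, EuclideanSpace.norm_single]
lemma my_norm1 : ‖ket1‖ = 1 := by simp [ket1, EuclideanSpace.norm_single]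

lemma my_Z0 : pauliZ ket0 = ket0 := by
  simp [pauliZ, ketbra, my_norm0, my_norm1, my_inner00, my_inner10, my_k00, my_k01, my_k10, my_k11]

lemma my_Z1 : pauliZ ket1 = -ket1 := by
  simp [pauliZ, ketbra, my_norm0, my_norm1, my_inner01, my_inner11, my_k00, my_k01, my_k10, my_k11]

lemma my_H0 : Hadamard ket0 = ((Real.sqrt 2 : ℂ))⁻¹ • (ket0 + ket1) := by
  simp [Hadamard, pauliZ, my_norm0, my_norm1, pauliX, ketbra, my_inner00, my_inner10, my_inner01, my_inner11, my_k00, my_k01, my_k10, my_k11]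

lemma my_H1 : Hadamard ket1 = ((Real.sqrt 2 : ℂ))⁻¹ • (ket0 - ket1) := by
  simp [Hadamard, pauliZ, my_norm0, my_norm1, pauliX, ketbra, my_inner00, my_inner10, my_inner01, my_inner11, my_k00, my_k01, my_k10, my_k11]
  module

lemma my_ctrl0 {H : Type*} [NormedAddCommGroup H] [InnerProductSpace ℂ H]
    [FiniteDimensional ℂ H] (A : H →ₗ[ℂ] H) (v : H) :
    controlGate A (ket0 ⊗ₜ[ℂ] v) = ket0 ⊗ₜ[ℂ] v := by
  simp [controlGate, proj0, my_norm0, my_norm1, proj1, ketbra, my_inner00, my_inner10, my_k00, my_k01, my_k10, my_k11]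

lemma my_ctrl1 {H : Type*} [NormedAddCommGroup H] [InnerProductSpace ℂ H]
    [FiniteDimensional ℂ H] (A : H →ₗ[ℂ] H) (v : H) :
    controlGate A (ket1 ⊗ₜ[ℂ] v) = ket1 ⊗ₜ[ℂ] A v := by
  simp [controlGate, proj0, my_norm0, my_norm1, proj1, ketbra, my_inner01, my_inner11, my_k00, my_k01, my_k10, my_k11]

end MyHelpers

/-- **Exact intertwining for `A0`:** `(Z ⊗ I) ∘ V_A = V_A ∘ A0`. -/
theorem A0_exact_intertwine
    {H_A : Type*} [NormedAddCommGroup H_A] [InnerProductSpace ℂ H_A]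
    [FiniteDimensional ℂ H_A]
    (A0 A1 : H_A →ₗ[ℂ] H_A)
    (hA0 : IsBinaryObservable A0) (hA1 : IsBinaryObservable A1) :
    (TensorProduct.map pauliZ (LinearMap.id : H_A →ₗ[ℂ] H_A)) ∘ₗ VA A0 A1
      = VA A0 A1 ∘ₗ A0 := by
  apply LinearMap.ext; intro v
  have hAA : A0 (A0 v) = v := LinearMap.congr_fun hA0.sq_one v
  simp only [VA, unitaryUA, embed, LinearMap.comp_apply, TensorProduct.mk_apply,
    TensorProduct.map_tmul, LinearMap.id_apply, my_H0, my_H1,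
    ← TensorProduct.smul_tmul', TensorProduct.add_tmul, TensorProduct.sub_tmul,
    TensorProduct.neg_tmul, map_add, map_smul, map_sub, map_neg,
    my_ctrl0, my_ctrl1, my_Z0, my_Z1, hAA]
  module
end
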